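/- Let {φ_μ}_{μ=1}^m be an orthonormal family in L²(ℝ^p) and {φ'_{μ'}}_{μ'=1}^{m'} an orthonormal family in L²(ℝ^q), let A be a real m-by-m' matrix, and define h(x,y) = Σ_{μ,μ'} A_{μ,μ'} · φ_μ(x) · φ'_{μ'}(y). Then the infimum over all g ∈ L²(ℝ^p) and g' ∈ L²(ℝ^q) of ∫ (h(x,y) − g(x)·g'(y))² dx dy equals the minimum over all vectors α ∈ ℝ^m and α' ∈ ℝ^{m'} of the squared Frobenius distance ‖A − α α'ᵀ‖_F² = Σ_{μ,μ'} (A_{μ,μ'} − α_μ α'_{μ'})², i.e., the squared Frobenius distance from A to the set of matrices of rank at most one; moreover the infimum is attained by g = Σ_μ α_μ φ_μ and g' = Σ_{μ'} α'_{μ'} φ'_{μ'} for minimizing α, α'. -/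

import Mathlib

open MeasureTheory

section aux
variable {α : Type*} [MeasurableSpace α] {μ : Measure α}

lemma abs_mul_le_half (a b : ℝ) : |a * b| ≤ (a ^ 2 + b ^ 2) / 2 := by
  rw [abs_mul]
  nlinarith [sq_nonneg (|a| - |b|), sq_abs a, sq_abs b, abs_nonneg a, abs_nonneg b]

lemma integrable_sq_of {f : α → ℝ} (hfm : Measurable f) (hf : MemLp f 2 μ) :
    Integrable (fun x => f x ^ 2) μ :=
  (memLp_two_iff_integrable_sq hfm.aestronglyMeasurable).mp hf

lemma integrable_mul_of {f g : α → ℝ} (hfm : Measurable f) (hf : MemLp f 2 μ)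
    (hgm : Measurable g) (hg : MemLp g 2 μ) :
    Integrable (fun x => f x * g x) μ := by
  refine Integrable.mono'
    (((integrable_sq_of hfm hf).add (integrable_sq_of hgm hg)).div_const 2)
    ((hfm.mul hgm).aestronglyMeasurable) ?_
  filter_upwards with x
  rw [Real.norm_eq_abs]; exact abs_mul_le_half (f x) (g x)

lemma expand_sub {f g : α → ℝ} (hfm : Measurable f) (hf : MemLp f 2 μ)
    (hgm : Measurable g) (hg : MemLp g 2 μ) :
    ∫ x, (f x - g x) ^ 2 ∂μ
      = (∫ x, f x ^ 2 ∂μ) - 2 * (∫ x, f x * g x ∂μ) + ∫ x, g x ^ 2 ∂μ := by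
  have hpt : ∀ x, (f x - g x) ^ 2 = f x ^ 2 - 2 * (f x * g x) + g x ^ 2 := fun x => by ring
  have h1 : Integrable (fun x => f x ^ 2 - 2 * (f x * g x)) μ :=
    (integrable_sq_of hfm hf).sub ((integrable_mul_of hfm hf hgm hg).const_mul 2)
  simp_rw [hpt]
  rw [integral_add h1 (integrable_sq_of hgm hg),
    integral_sub (integrable_sq_of hfm hf) ((integrable_mul_of hfm hf hgm hg).const_mul 2),
    MeasureTheory.integral_const_mul]

set_option linter.unusedSectionVars false

variable {ι : Type*} [Fintype ι] [DecidableEq ι] {e : ι → α → ℝ}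

lemma comb_measurable (hem : ∀ i, Measurable (e i)) (c : ι → ℝ) :
    Measurable (fun x => ∑ i, c i * e i x) :=
  Finset.measurable_sum _ fun i _ => (hem i).const_mul (c i)

lemma comb_memLp (he2 : ∀ i, MemLp (e i) 2 μ) (c : ι → ℝ) :
    MemLp (fun x => ∑ i, c i * e i x) 2 μ :=
  memLp_finset_sum Finset.univ (fun i _ => (he2 i).const_mul (c i))

variable (horth : ∀ i j, ∫ x, e i x * e j x ∂μ = if i = j then (1:ℝ) else 0)

lemma comb_integral_mul (hem : ∀ i, Measurable (e i)) (he2 : ∀ i, MemLp (e i) 2 μ)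
    (c : ι → ℝ) {g : α → ℝ} (hgm : Measurable g) (hg : MemLp g 2 μ) :
    ∫ x, (∑ i, c i * e i x) * g x ∂μ = ∑ i, c i * ∫ x, e i x * g x ∂μ := by
  have hpt : ∀ x, (∑ i, c i * e i x) * g x = ∑ i, c i * (e i x * g x) := by
    intro x; rw [Finset.sum_mul]; exact Finset.sum_congr rfl fun i _ => by ring
  simp_rw [hpt]
  rw [integral_finset_sum _ (fun i _ =>
    (integrable_mul_of (hem i) (he2 i) hgm hg).const_mul (c i))]
  exact Finset.sum_congr rfl fun i _ => integral_const_mul _ _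

include horth

lemma comb_inner (hem : ∀ i, Measurable (e i)) (he2 : ∀ i, MemLp (e i) 2 μ)
    (c : ι → ℝ) (j : ι) :
    ∫ x, (∑ i, c i * e i x) * e j x ∂μ = c j := by
  rw [comb_integral_mul hem he2 c (hem j) (he2 j)]
  simp [horth]

lemma comb_sq (hem : ∀ i, Measurable (e i)) (he2 : ∀ i, MemLp (e i) 2 μ) (c : ι → ℝ) :
    ∫ x, (∑ i, c i * e i x) ^ 2 ∂μ = ∑ i, c i ^ 2 := by
  have hpt : ∀ x, (∑ i, c i * e i x) ^ 2
      = (∑ i, c i * e i x) * (∑ i, c i * e i x) := fun x => sq _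
  simp_rw [hpt]
  rw [comb_integral_mul hem he2 c (comb_measurable hem c) (comb_memLp he2 c)]
  have hin : ∀ i, ∫ x, e i x * (∑ j, c j * e j x) ∂μ = c i := by
    intro i
    have : ∀ x, e i x * (∑ j, c j * e j x) = (∑ j, c j * e j x) * e i x :=
      fun x => mul_comm _ _
    simp_rw [this]
    exact comb_inner horth hem he2 c i
  simp_rw [hin]
  exact Finset.sum_congr rfl fun i _ => (sq _).symm

lemma bessel (hem : ∀ i, Measurable (e i)) (he2 : ∀ i, MemLp (e i) 2 μ)
    {g : α → ℝ} (hgm : Measurable g) (hg : MemLp g 2 μ) :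
    ∑ i, (∫ x, g x * e i x ∂μ) ^ 2 ≤ ∫ x, g x ^ 2 ∂μ := by
  set b : ι → ℝ := fun i => ∫ x, g x * e i x ∂μ with hb
  have h0 : 0 ≤ ∫ x, (g x - ∑ i, b i * e i x) ^ 2 ∂μ :=
    integral_nonneg fun x => sq_nonneg _
  rw [expand_sub hgm hg (comb_measurable hem b) (comb_memLp he2 b)] at h0
  have h1 : ∫ x, g x * (∑ i, b i * e i x) ∂μ = ∑ i, b i ^ 2 := by
    have : ∀ x, g x * (∑ i, b i * e i x) = (∑ i, b i * e i x) * g x :=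
      fun x => mul_comm _ _
    simp_rw [this]
    rw [comb_integral_mul hem he2 b hgm hg]
    refine Finset.sum_congr rfl fun i _ => ?_
    have h3 : ∫ x, e i x * g x ∂μ = b i := by
      rw [hb]; congr 1; funext x; ring
    rw [h3, sq]
  have h2 : ∫ x, (∑ i, b i * e i x) ^ 2 ∂μ = ∑ i, b i ^ 2 :=
    comb_sq horth hem he2 b
  rw [h1, h2] at h0
  linarith

end aux

section prodaux
variable {α β : Type*} [MeasureSpace α] [MeasureSpace β]
  [SigmaFinite (volume : Measure α)] [SigmaFinite (volume : Measure β)]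

lemma memLp_prod_mul {f : α → ℝ} {g : β → ℝ} (hfm : Measurable f) (hf : MemLp f 2 volume)
    (hgm : Measurable g) (hg : MemLp g 2 volume) :
    MemLp (fun z : α × β => f z.1 * g z.2) 2 volume := by
  have hm : Measurable fun z : α × β => f z.1 * g z.2 :=
    (hfm.comp measurable_fst).mul (hgm.comp measurable_snd)
  rw [memLp_two_iff_integrable_sq hm.aestronglyMeasurable]
  have hpt : ∀ z : α × β, (f z.1 * g z.2) ^ 2 = f z.1 ^ 2 * g z.2 ^ 2 := fun z => by ring
  simp_rw [hpt]
  rw [show (volume : Measure (α × β)) = (volume : Measure α).prod volume from rfl]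
  exact (integrable_sq_of hfm hf).mul_prod (integrable_sq_of hgm hg)

lemma integral_prod_mul' (f : α → ℝ) (g : β → ℝ) :
    ∫ z : α × β, f z.1 * g z.2 = (∫ x, f x) * ∫ y, g y := by
  rw [show (volume : Measure (α × β)) = (volume : Measure α).prod volume from rfl]
  exact integral_prod_mul f g
end prodaux

lemma sum_expand {m m' : ℕ} (A : Matrix (Fin m) (Fin m') ℝ) (β : Fin m → ℝ) (β' : Fin m' → ℝ) :
    ∑ μ, ∑ μ', (A μ μ' - β μ * β' μ') ^ 2
      = (∑ μ, ∑ μ', A μ μ' ^ 2)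
        - 2 * (∑ μ, ∑ μ', A μ μ' * (β μ * β' μ'))
        + (∑ μ, β μ ^ 2) * (∑ μ', β' μ' ^ 2) := by
  rw [Finset.sum_mul_sum, Finset.mul_sum]
  rw [← Finset.sum_sub_distrib, ← Finset.sum_add_distrib]
  refine Finset.sum_congr rfl fun μ _ => ?_
  rw [Finset.mul_sum, ← Finset.sum_sub_distrib, ← Finset.sum_add_distrib]
  exact Finset.sum_congr rfl fun μ' _ => by ring

lemma exists_min_rank_one (m m' : ℕ) (A : Matrix (Fin m) (Fin m') ℝ) :
    ∃ (α : Fin m → ℝ) (α' : Fin m' → ℝ), ∀ (β : Fin m → ℝ) (β' : Fin m' → ℝ),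
      ∑ μ, ∑ μ', (A μ μ' - α μ * α' μ') ^ 2 ≤ ∑ μ, ∑ μ', (A μ μ' - β μ * β' μ') ^ 2 := by
  classical
  set N : ℝ := ∑ μ, ∑ μ', A μ μ' ^ 2 with hN
  have hN0 : 0 ≤ N := Finset.sum_nonneg fun μ _ => Finset.sum_nonneg fun μ' _ => sq_nonneg _
  set L : ℝ := 2 * Real.sqrt N with hL
  have hL0 : 0 ≤ L := by positivity
  set R : ℝ := Real.sqrt L with hR
  have hR0 : 0 ≤ R := Real.sqrt_nonneg _
  set G : (Fin m → ℝ) × (Fin m' → ℝ) → ℝ :=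
    fun w => ∑ μ, ∑ μ', (A μ μ' - w.1 μ * w.2 μ') ^ 2 with hG
  have hGc : Continuous G := by
    apply continuous_finset_sum; intro μ _
    apply continuous_finset_sum; intro μ' _
    fun_prop
  set K : Set ((Fin m → ℝ) × (Fin m' → ℝ)) :=
    Metric.closedBall 0 R ×ˢ Metric.closedBall 0 R with hK
  have hKc : IsCompact K := (isCompact_closedBall _ _).prod (isCompact_closedBall _ _)
  have hKne : K.Nonempty := ⟨(0, 0), by simp [hK, hR0]⟩
  obtain ⟨c, hcK, hcmin⟩ := hKc.exists_isMinOn hKne hGc.continuousOn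
  refine ⟨c.1, c.2, fun β β' => ?_⟩
  show G c ≤ G (β, β')
  have hnorm_sq : ∀ (n : ℕ) (v : Fin n → ℝ), ‖v‖ ^ 2 ≤ ∑ i, v i ^ 2 := by
    intro n v
    have h1 : ‖v‖ ≤ Real.sqrt (∑ i, v i ^ 2) := by
      rw [pi_norm_le_iff_of_nonneg (Real.sqrt_nonneg _)]
      intro i
      rw [Real.norm_eq_abs, ← Real.sqrt_sq_eq_abs]
      exact Real.sqrt_le_sqrt (Finset.single_le_sum (fun j _ => sq_nonneg (v j))
        (Finset.mem_univ i))
    calc ‖v‖ ^ 2 ≤ Real.sqrt (∑ i, v i ^ 2) ^ 2 := by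
          exact pow_le_pow_left₀ (norm_nonneg _) h1 2
      _ = ∑ i, v i ^ 2 := Real.sq_sqrt (Finset.sum_nonneg fun i _ => sq_nonneg _)
  by_cases hc1 : ‖β‖ * ‖β'‖ ≤ L
  · by_cases hb0 : β = 0
    · have hG0 : G (β, β') = G (0, 0) := by
        simp [hG, hb0]
      rw [hG0]
      exact hcmin (by simp [hK, hR0])
    by_cases hb'0 : β' = 0
    · have hG0 : G (β, β') = G (0, 0) := by
        simp [hG, hb'0]
      rw [hG0]
      exact hcmin (by simp [hK, hR0])
    · have hβpos : 0 < ‖β‖ := norm_pos_iff.mpr hb0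
      have hβ'pos : 0 < ‖β'‖ := norm_pos_iff.mpr hb'0
      set s : ℝ := Real.sqrt (‖β'‖ / ‖β‖) with hs
      have hspos : 0 < s := Real.sqrt_pos.mpr (by positivity)
      have hs2 : s ^ 2 = ‖β'‖ / ‖β‖ := Real.sq_sqrt (by positivity)
      set γ := s • β with hγ
      set γ' := s⁻¹ • β' with hγ'
      have hprod : ∀ μ μ', γ μ * γ' μ' = β μ * β' μ' := by
        intro μ μ'
        simp only [hγ, hγ', Pi.smul_apply, smul_eq_mul]
        field_simp
      have hγn : ‖γ‖ ≤ R := by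
        have h2 : ‖γ‖ ^ 2 = ‖β‖ * ‖β'‖ := by
          rw [hγ, norm_smul, Real.norm_eq_abs, abs_of_pos hspos, mul_pow, hs2]
          field_simp
        have : ‖γ‖ ^ 2 ≤ L := h2.le.trans hc1
        calc ‖γ‖ = Real.sqrt (‖γ‖ ^ 2) := (Real.sqrt_sq (norm_nonneg _)).symm
          _ ≤ Real.sqrt L := Real.sqrt_le_sqrt this
      have hγ'n : ‖γ'‖ ≤ R := by
        have h2 : ‖γ'‖ ^ 2 = ‖β‖ * ‖β'‖ := by
          rw [hγ', norm_smul, Real.norm_eq_abs, abs_of_pos (inv_pos.mpr hspos), mul_pow,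
            inv_pow, hs2]
          field_simp
        have : ‖γ'‖ ^ 2 ≤ L := h2.le.trans hc1
        calc ‖γ'‖ = Real.sqrt (‖γ'‖ ^ 2) := (Real.sqrt_sq (norm_nonneg _)).symm
          _ ≤ Real.sqrt L := Real.sqrt_le_sqrt this
      have hmem : (γ, γ') ∈ K := by
        constructor <;> simpa [hK] using (by assumption : _ ≤ R)
      have hGeq : G (γ, γ') = G (β, β') := by
        simp only [hG]
        exact Finset.sum_congr rfl fun μ _ => Finset.sum_congr rfl fun μ' _ => by
          rw [hprod μ μ']
      calc G c ≤ G (γ, γ') := hcmin hmem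
        _ = G (β, β') := hGeq
  · push_neg at hc1
    have h00 : G (0, 0) = N := by simp [hG, hN]
    have hstep : N ≤ G (β, β') := by
      have hM : (‖β‖ * ‖β'‖) ^ 2 ≤ (∑ μ, β μ ^ 2) * (∑ μ', β' μ' ^ 2) := by
        rw [mul_pow]
        exact mul_le_mul (hnorm_sq m β) (hnorm_sq m' β')
          (sq_nonneg _) (Finset.sum_nonneg fun i _ => sq_nonneg _)
      set M : ℝ := (∑ μ, β μ ^ 2) * (∑ μ', β' μ' ^ 2) with hMdef
      have hM0 : 0 ≤ M := le_trans (sq_nonneg _) hM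
      set S : ℝ := ∑ μ, ∑ μ', A μ μ' * (β μ * β' μ') with hS
      have hCS : S ^ 2 ≤ N * M := by
        have hcs := Finset.sum_mul_sq_le_sq_mul_sq Finset.univ
          (fun x : Fin m × Fin m' => A x.1 x.2) (fun x => β x.1 * β' x.2)
        have hSx : S = ∑ x : Fin m × Fin m', A x.1 x.2 * (β x.1 * β' x.2) := by
          rw [hS, Fintype.sum_prod_type]
        have hNx : N = ∑ x : Fin m × Fin m', A x.1 x.2 ^ 2 := by
          rw [hN, Fintype.sum_prod_type]
        have hM2 : M = ∑ x : Fin m × Fin m', (β x.1 * β' x.2) ^ 2 := by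
          rw [hMdef, Finset.sum_mul_sum, Fintype.sum_prod_type]
          exact Finset.sum_congr rfl fun μ _ =>
            Finset.sum_congr rfl fun μ' _ => (mul_pow _ _ _).symm
        rw [hSx, hNx, hM2]
        exact hcs
      have hSle : S ≤ Real.sqrt N * Real.sqrt M := by
        calc S ≤ |S| := le_abs_self S
          _ = Real.sqrt (S ^ 2) := (Real.sqrt_sq_eq_abs S).symm
          _ ≤ Real.sqrt (N * M) := Real.sqrt_le_sqrt hCS
          _ = Real.sqrt N * Real.sqrt M := Real.sqrt_mul hN0 M
      have hMbig : 2 * Real.sqrt N ≤ Real.sqrt M := by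
        have h4 : L ^ 2 ≤ M := by
          nlinarith [hc1, norm_nonneg β, norm_nonneg β', hM]
        calc 2 * Real.sqrt N = L := rfl
          _ = Real.sqrt (L ^ 2) := (Real.sqrt_sq hL0).symm
          _ ≤ Real.sqrt M := Real.sqrt_le_sqrt h4
      have hexp : G (β, β') = N - 2 * S + M := by
        simp only [hG]
        exact sum_expand A β β'
      rw [hexp]
      have hsqrtM : Real.sqrt M ^ 2 = M := Real.sq_sqrt hM0
      nlinarith [Real.sqrt_nonneg N, Real.sqrt_nonneg M, hSle, hMbig, hsqrtM]
    calc G c ≤ G (0, 0) := hcmin (by simp [hK, hR0])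
      _ = N := h00
      _ ≤ G (β, β') := hstep

theorem stmt13 (p q m m' : ℕ)
    (φ : Fin m → (Fin p → ℝ) → ℝ) (φ' : Fin m' → (Fin q → ℝ) → ℝ)
    (hφm : ∀ μ, Measurable (φ μ)) (hφ2 : ∀ μ, MemLp (φ μ) 2 volume)
    (hφ'm : ∀ μ', Measurable (φ' μ')) (hφ'2 : ∀ μ', MemLp (φ' μ') 2 volume)
    (horth : ∀ μ ν : Fin m,
      ∫ x : Fin p → ℝ, φ μ x * φ ν x = if μ = ν then (1 : ℝ) else 0)
    (horth' : ∀ μ' ν' : Fin m',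
      ∫ y : Fin q → ℝ, φ' μ' y * φ' ν' y = if μ' = ν' then (1 : ℝ) else 0)
    (A : Matrix (Fin m) (Fin m') ℝ)
    (h : (Fin p → ℝ) × (Fin q → ℝ) → ℝ)
    (hdef : ∀ (x : Fin p → ℝ) (y : Fin q → ℝ),
      h (x, y) = ∑ μ, ∑ μ', A μ μ' * (φ μ x * φ' μ' y)) :
    ∃ (α : Fin m → ℝ) (α' : Fin m' → ℝ),
      IsLeast {t : ℝ | ∃ (β : Fin m → ℝ) (β' : Fin m' → ℝ),
          t = ∑ μ, ∑ μ', (A μ μ' - β μ * β' μ') ^ 2}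
        (∑ μ, ∑ μ', (A μ μ' - α μ * α' μ') ^ 2) ∧
      IsGLB {t : ℝ | ∃ (g : (Fin p → ℝ) → ℝ) (g' : (Fin q → ℝ) → ℝ),
          Measurable g ∧ MemLp g 2 volume ∧ Measurable g' ∧ MemLp g' 2 volume ∧
          t = ∫ z : (Fin p → ℝ) × (Fin q → ℝ), (h z - g z.1 * g' z.2) ^ 2}
        (∑ μ, ∑ μ', (A μ μ' - α μ * α' μ') ^ 2) ∧
      (∫ z : (Fin p → ℝ) × (Fin q → ℝ),
          (h z - (∑ μ, α μ * φ μ z.1) * (∑ μ', α' μ' * φ' μ' z.2)) ^ 2)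
        = ∑ μ, ∑ μ', (A μ μ' - α μ * α' μ') ^ 2 := by
  classical
  obtain ⟨α, α', hmin⟩ := exists_min_rank_one m m' A
  -- the product orthonormal family
  set e : (Fin m × Fin m') → ((Fin p → ℝ) × (Fin q → ℝ)) → ℝ :=
    fun i z => φ i.1 z.1 * φ' i.2 z.2 with he
  have hem : ∀ i, Measurable (e i) := fun i =>
    ((hφm i.1).comp measurable_fst).mul ((hφ'm i.2).comp measurable_snd)
  have he2 : ∀ i, MemLp (e i) 2 volume := fun i =>
    memLp_prod_mul (hφm i.1) (hφ2 i.1) (hφ'm i.2) (hφ'2 i.2)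
  have horthe : ∀ i j, ∫ z : (Fin p → ℝ) × (Fin q → ℝ), e i z * e j z
      = if i = j then (1:ℝ) else 0 := by
    intro i j
    calc ∫ z : (Fin p → ℝ) × (Fin q → ℝ), e i z * e j z
        = ∫ z : (Fin p → ℝ) × (Fin q → ℝ),
            (φ i.1 z.1 * φ j.1 z.1) * (φ' i.2 z.2 * φ' j.2 z.2) := by
          congr 1; funext z; simp only [he]; ring
      _ = (∫ x, φ i.1 x * φ j.1 x) * ∫ y, φ' i.2 y * φ' j.2 y :=
          integral_prod_mul' (fun x => φ i.1 x * φ j.1 x) (fun y => φ' i.2 y * φ' j.2 y)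
      _ = (if i.1 = j.1 then (1:ℝ) else 0) * (if i.2 = j.2 then (1:ℝ) else 0) := by
          rw [horth, horth']
      _ = if i = j then (1:ℝ) else 0 := by
          rcases i with ⟨i1, i2⟩; rcases j with ⟨j1, j2⟩
          by_cases h1 : i1 = j1 <;> by_cases h2 : i2 = j2 <;>
            simp [h1, h2, Prod.ext_iff]
  set cA : (Fin m × Fin m') → ℝ := fun i => A i.1 i.2 with hcA
  have hfz : ∀ z : (Fin p → ℝ) × (Fin q → ℝ), h z = ∑ i, cA i * e i z := by
    intro z
    rw [Fintype.sum_prod_type]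
    exact hdef z.1 z.2
  have hhm : Measurable h := by
    have : h = fun z => ∑ i, cA i * e i z := funext hfz
    rw [this]; exact comb_measurable hem cA
  have hh2 : MemLp h 2 volume := by
    have : h = fun z => ∑ i, cA i * e i z := funext hfz
    rw [this]; exact comb_memLp he2 cA
  -- the key formula
  have key : ∀ (g : (Fin p → ℝ) → ℝ) (g' : (Fin q → ℝ) → ℝ),
      Measurable g → MemLp g 2 volume → Measurable g' → MemLp g' 2 volume →
      ∫ z : (Fin p → ℝ) × (Fin q → ℝ), (h z - g z.1 * g' z.2) ^ 2
        = (∑ μ, ∑ μ', A μ μ' ^ 2)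
          - 2 * (∑ μ, ∑ μ', A μ μ' * ((∫ x, g x * φ μ x) * ∫ y, g' y * φ' μ' y))
          + (∫ x, g x ^ 2) * ∫ y, g' y ^ 2 := by
    intro g g' hgm hg2 hg'm hg'2
    have hum : Measurable (fun z : (Fin p → ℝ) × (Fin q → ℝ) => g z.1 * g' z.2) :=
      (hgm.comp measurable_fst).mul (hg'm.comp measurable_snd)
    have hu2 : MemLp (fun z : (Fin p → ℝ) × (Fin q → ℝ) => g z.1 * g' z.2) 2 volume :=
      memLp_prod_mul hgm hg2 hg'm hg'2
    rw [expand_sub hhm hh2 hum hu2]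
    have e1 : ∫ z : (Fin p → ℝ) × (Fin q → ℝ), h z ^ 2 = ∑ μ, ∑ μ', A μ μ' ^ 2 := by
      simp_rw [hfz]
      rw [comb_sq horthe hem he2 cA, Fintype.sum_prod_type]
    have e2 : ∫ z : (Fin p → ℝ) × (Fin q → ℝ), h z * (g z.1 * g' z.2)
        = ∑ μ, ∑ μ', A μ μ' * ((∫ x, g x * φ μ x) * ∫ y, g' y * φ' μ' y) := by
      simp_rw [hfz]
      rw [comb_integral_mul hem he2 cA hum hu2]
      rw [← Fintype.sum_prod_type
        (f := fun i : Fin m × Fin m' =>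
          A i.1 i.2 * ((∫ x, g x * φ i.1 x) * ∫ y, g' y * φ' i.2 y))]
      refine Finset.sum_congr rfl fun i _ => ?_
      congr 1
      calc ∫ z : (Fin p → ℝ) × (Fin q → ℝ), e i z * (g z.1 * g' z.2)
          = ∫ z : (Fin p → ℝ) × (Fin q → ℝ),
              (g z.1 * φ i.1 z.1) * (g' z.2 * φ' i.2 z.2) := by
            congr 1; funext z; simp only [he]; ring
        _ = (∫ x, g x * φ i.1 x) * ∫ y, g' y * φ' i.2 y :=
            integral_prod_mul' (fun x => g x * φ i.1 x) (fun y => g' y * φ' i.2 y)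
    have e3 : ∫ z : (Fin p → ℝ) × (Fin q → ℝ), (g z.1 * g' z.2) ^ 2
        = (∫ x, g x ^ 2) * ∫ y, g' y ^ 2 := by
      calc ∫ z : (Fin p → ℝ) × (Fin q → ℝ), (g z.1 * g' z.2) ^ 2
          = ∫ z : (Fin p → ℝ) × (Fin q → ℝ), (g z.1 ^ 2) * (g' z.2 ^ 2) := by
            congr 1; funext z; ring
        _ = (∫ x, g x ^ 2) * ∫ y, g' y ^ 2 :=
            integral_prod_mul' (fun x => g x ^ 2) (fun y => g' y ^ 2)
    rw [e1, e2, e3]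
  -- value at combinations
  have hval : ∀ (β : Fin m → ℝ) (β' : Fin m' → ℝ),
      ∫ z : (Fin p → ℝ) × (Fin q → ℝ),
        (h z - (∑ μ, β μ * φ μ z.1) * (∑ μ', β' μ' * φ' μ' z.2)) ^ 2
      = ∑ μ, ∑ μ', (A μ μ' - β μ * β' μ') ^ 2 := by
    intro β β'
    rw [key (fun x => ∑ μ, β μ * φ μ x) (fun y => ∑ μ', β' μ' * φ' μ' y)
      (comb_measurable hφm β) (comb_memLp hφ2 β)
      (comb_measurable hφ'm β') (comb_memLp hφ'2 β')]
    have hb : ∀ μ, ∫ x, (∑ ν, β ν * φ ν x) * φ μ x = β μ := fun μ =>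
      comb_inner horth hφm hφ2 β μ
    have hb' : ∀ μ', ∫ y, (∑ ν', β' ν' * φ' ν' y) * φ' μ' y = β' μ' := fun μ' =>
      comb_inner horth' hφ'm hφ'2 β' μ'
    simp_rw [hb, hb', comb_sq horth hφm hφ2 β, comb_sq horth' hφ'm hφ'2 β']
    exact (sum_expand A β β').symm
  refine ⟨α, α', ⟨⟨α, α', rfl⟩, ?_⟩, ?_, hval α α'⟩
  · rintro t ⟨β, β', rfl⟩
    exact hmin β β'
  · refine IsLeast.isGLB ⟨⟨fun x => ∑ μ, α μ * φ μ x, fun y => ∑ μ', α' μ' * φ' μ' y,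
      comb_measurable hφm α, comb_memLp hφ2 α,
      comb_measurable hφ'm α', comb_memLp hφ'2 α', (hval α α').symm⟩, ?_⟩
    rintro t ⟨g, g', hgm, hg2, hg'm, hg'2, rfl⟩
    rw [key g g' hgm hg2 hg'm hg'2]
    set b : Fin m → ℝ := fun μ => ∫ x, g x * φ μ x with hbdef
    set b' : Fin m' → ℝ := fun μ' => ∫ y, g' y * φ' μ' y with hb'def
    have hbess : ∑ μ, b μ ^ 2 ≤ ∫ x, g x ^ 2 := bessel horth hφm hφ2 hgm hg2
    have hbess' : ∑ μ', b' μ' ^ 2 ≤ ∫ y, g' y ^ 2 := bessel horth' hφ'm hφ'2 hg'm hg'2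
    have hb0 : (0:ℝ) ≤ ∑ μ, b μ ^ 2 := Finset.sum_nonneg fun μ _ => sq_nonneg _
    have hb'0 : (0:ℝ) ≤ ∑ μ', b' μ' ^ 2 := Finset.sum_nonneg fun μ' _ => sq_nonneg _
    have hprod : (∑ μ, b μ ^ 2) * (∑ μ', b' μ' ^ 2) ≤ (∫ x, g x ^ 2) * ∫ y, g' y ^ 2 :=
      mul_le_mul hbess hbess' hb'0 (hb0.trans hbess)
    have hlow := hmin b b'
    rw [sum_expand A b b'] at hlow
    linarith
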